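/- Let φ : (0,1) → (0,∞) be measurable, g(x) = ∫_x^1 φ(t) dt/t finite for x ∈ (0,1), C ≥ 1 with g(x) ≤ C φ(x) for all x ∈ (0,1). Then g(t₂) t₂^{1/C} ≤ g(t₁) t₁^{1/C} for all 0 < t₁ ≤ t₂ < 1; that is, x^{1/C} g(x) is nonincreasing on (0,1). -/

import Mathlib

open MeasureTheory Set Real

/-- If `g(x) = ∫_x^1 φ(t) dt/t` satisfies `g ≤ C φ`, then `x^{1/C} g(x)` is
nonincreasing on `(0,1)`. -/
theorem stmt_6 (φ g : ℝ → ℝ) (C : ℝ)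
    (hφmeas : Measurable φ)
    (hφpos : ∀ x ∈ Set.Ioo (0:ℝ) 1, 0 < φ x)
    (hintegr : ∀ x ∈ Set.Ioo (0:ℝ) 1,
      MeasureTheory.IntegrableOn (fun t => φ t / t) (Set.Ioc x 1))
    (hgdef : ∀ x ∈ Set.Ioo (0:ℝ) 1, g x = ∫ t in Set.Ioc x 1, φ t / t)
    (hC : 1 ≤ C)
    (hg : ∀ x ∈ Set.Ioo (0:ℝ) 1, g x ≤ C * φ x) :
    ∀ t₁ t₂ : ℝ, 0 < t₁ → t₁ ≤ t₂ → t₂ < 1 →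
      g t₂ * t₂ ^ (1 / C) ≤ g t₁ * t₁ ^ (1 / C) := by
  intro t₁ t₂ ht₁ h12 ht₂
  have hC0 : (0:ℝ) < C := lt_of_lt_of_le one_pos hC
  set r : ℝ := 1 / C with hrdef
  have hr0 : 0 < r := by positivity
  have ht₁1 : t₁ < 1 := lt_of_le_of_lt h12 ht₂
  have ht₁m : t₁ ∈ Ioo (0:ℝ) 1 := ⟨ht₁, ht₁1⟩
  have ht₂0 : 0 < t₂ := lt_of_lt_of_le ht₁ h12
  have ht₂m : t₂ ∈ Ioo (0:ℝ) 1 := ⟨ht₂0, ht₂⟩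
  set S : Set ℝ := Ioc t₁ t₂ with hSdef
  have hSsub : S ⊆ Ioo (0:ℝ) 1 := fun u hu => ⟨lt_trans ht₁ hu.1, lt_of_le_of_lt hu.2 ht₂⟩
  set h : ℝ → ℝ := fun u => φ u / u with hhdef
  have hhmeas : Measurable h := hφmeas.div measurable_id
  -- integrability of φ/u on subsets
  have IφS : IntegrableOn h S := (hintegr t₁ ht₁m).mono_set (Ioc_subset_Ioc_right (le_of_lt ht₂))
  have hnn : ∀ u ∈ S, 0 ≤ h u := fun u hu =>
    le_of_lt (div_pos (hφpos u (hSsub hu)) (lt_trans ht₁ hu.1))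
  -- the weight function
  set w : ℝ → ℝ := fun s => r * s ^ (r - 1) with hwdef
  have hwmeas : Measurable w := measurable_const.mul (measurable_id.pow measurable_const)
  have IwS : IntegrableOn w S := by
    have hco : ContinuousOn w (Icc t₁ t₂) := by
      apply ContinuousOn.mul continuousOn_const
      exact ContinuousOn.rpow_const continuousOn_id
        (fun x hx => Or.inl (ne_of_gt (lt_of_lt_of_le ht₁ hx.1)))
    exact (hco.integrableOn_compact isCompact_Icc).mono_set Ioc_subset_Icc_self
  -- FTC for the weight function
  have ftc : ∀ u, t₁ ≤ u → ∫ s in Ioc t₁ u, w s = u ^ r - t₁ ^ r := by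
    intro u hu
    rw [← intervalIntegral.integral_of_le hu]
    rw [intervalIntegral.integral_const_mul, integral_rpow (Or.inl (by linarith))]
    have : r - 1 + 1 = r := by ring
    rw [this]
    field_simp
  -- the tail function G
  set G : ℝ → ℝ := fun s => ∫ u in Ioc (max s t₁) t₂, h u with hGdef
  have hGanti : Antitone G := by
    intro s s' hss
    apply setIntegral_mono_set (IφS.mono_set ?_) ?_ ?_
    · exact Ioc_subset_Ioc_left (le_max_right _ _)
    · refine (ae_restrict_iff' measurableSet_Ioc).mpr (ae_of_all _ fun u hu => ?_)
      exact hnn u (Ioc_subset_Ioc_left (le_max_right _ _) hu)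
    · exact HasSubset.Subset.eventuallyLE (Ioc_subset_Ioc_left (max_le_max hss le_rfl))
  have hGmeas : Measurable G := hGanti.measurable
  have hGeq : ∀ s ∈ S, G s = ∫ u in Ioc s t₂, h u := by
    intro s hs
    simp only [hGdef, max_eq_left (le_of_lt hs.1)]
  set A : ℝ := ∫ u in S, h u with hAdef
  have hGnonneg : ∀ s, 0 ≤ G s := fun s =>
    setIntegral_nonneg measurableSet_Ioc fun u hu =>
      hnn u (Ioc_subset_Ioc_left (le_max_right _ _) hu)
  have hGleA : ∀ s, G s ≤ A := by
    intro s
    apply setIntegral_mono_set IφS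
      ((ae_restrict_iff' measurableSet_Ioc).mpr (ae_of_all _ hnn))
    exact HasSubset.Subset.eventuallyLE (Ioc_subset_Ioc_left (le_max_right _ _))
  -- splitting g
  have hsplit : ∀ s, t₁ ≤ s → s ≤ t₂ → g s = g t₂ + ∫ u in Ioc s t₂, h u := by
    intro s hs1 hs2
    have hs0 : 0 < s := lt_of_lt_of_le ht₁ hs1
    have hs1' : s < 1 := lt_of_le_of_lt hs2 ht₂
    have hun : Ioc s t₂ ∪ Ioc t₂ 1 = Ioc s 1 := Ioc_union_Ioc_eq_Ioc hs2 (le_of_lt ht₂)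
    have I1 : IntegrableOn h (Ioc s t₂) :=
      (hintegr s ⟨hs0, hs1'⟩).mono_set (Ioc_subset_Ioc_right (le_of_lt ht₂))
    have I2 : IntegrableOn h (Ioc t₂ 1) := hintegr t₂ ht₂m
    rw [hgdef s ⟨hs0, hs1'⟩, hgdef t₂ ht₂m, ← hun,
      setIntegral_union (Ioc_disjoint_Ioc_of_le le_rfl) measurableSet_Ioc I1 I2]
    exact add_comm _ _
  have hgS : ∀ s ∈ S, g s = g t₂ + G s := by
    intro s hs
    rw [hGeq s hs]
    exact hsplit s (le_of_lt hs.1) hs.2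
  have hA : g t₁ = g t₂ + A := by
    rw [hAdef, hSdef]
    exact hsplit t₁ le_rfl h12
  -- integrability facts
  have IwG : IntegrableOn (fun s => (g t₂ + G s) * w s) S := by
    apply Integrable.bdd_mul (c := |g t₂| + A) IwS ((measurable_const.add hGmeas).aestronglyMeasurable)
    refine ae_of_all _ (fun s => ?_)
    have h1 := hGnonneg s
    have h2 := hGleA s
    show ‖g t₂ + G s‖ ≤ |g t₂| + A
    rw [Real.norm_eq_abs]
    have : |g t₂ + G s| ≤ |g t₂| + |G s| := abs_add_le _ _
    rw [abs_of_nonneg h1] at this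
    linarith
  have IwgS : IntegrableOn (fun s => w s * g s) S := by
    apply (IwG.congr_fun _ measurableSet_Ioc)
    intro s hs
    show (g t₂ + G s) * w s = w s * g s
    rw [hgS s hs]; ring
  have IφrS : IntegrableOn (fun u => u ^ r * h u) S := by
    apply Integrable.bdd_mul (c := 1) IφS
    · exact ((measurable_id.pow (measurable_const (a := r))).aestronglyMeasurable)
    · refine (ae_restrict_iff' measurableSet_Ioc).mpr (ae_of_all _ fun u hu => ?_)
      rw [Real.norm_eq_abs, abs_of_nonneg (Real.rpow_nonneg (le_of_lt (hSsub hu).1) r)]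
      exact Real.rpow_le_one (le_of_lt (hSsub hu).1) (le_of_lt (hSsub hu).2) (le_of_lt hr0)
  -- key pointwise inequality
  have key : ∫ s in S, w s * g s ≤ ∫ u in S, u ^ r * h u := by
    apply setIntegral_mono_on IwgS IφrS measurableSet_Ioc
    intro s hs
    have hsm := hSsub hs
    have hs0 : (0:ℝ) < s := hsm.1
    have hgle : r * g s ≤ φ s := by
      rw [hrdef, div_mul_eq_mul_div, one_mul, div_le_iff₀ hC0]
      nlinarith [hg s hsm]
    have hw : w s * g s = s ^ r / s * (r * g s) := by
      show r * s ^ (r - 1) * g s = s ^ r / s * (r * g s)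
      rw [Real.rpow_sub_one (ne_of_gt hs0)]
      ring
    have h2 : s ^ r * h s = s ^ r / s * φ s := by
      show s ^ r * (φ s / s) = s ^ r / s * φ s
      ring
    rw [hw, h2]
    apply mul_le_mul_of_nonneg_left hgle (by positivity)
  -- Fubini
  set f : ℝ → ℝ → ℝ := fun s u => (Ioi s).indicator h u * w s with hfdef
  have hT : MeasurableSet {p : ℝ × ℝ | p.1 < p.2} :=
    measurableSet_lt measurable_fst measurable_snd
  have hfint : Integrable (Function.uncurry f)
      ((volume.restrict S).prod (volume.restrict S)) := by
    have h1 : Integrable (fun p : ℝ × ℝ => w p.1 * h p.2)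
        ((volume.restrict S).prod (volume.restrict S)) := IwS.mul_prod IφS
    apply (h1.indicator hT).congr
    apply ae_of_all
    intro p
    show {q : ℝ × ℝ | q.1 < q.2}.indicator (fun q => w q.1 * h q.2) p = f p.1 p.2
    by_cases hp : p.1 < p.2
    · rw [Set.indicator_of_mem (show p ∈ {q : ℝ × ℝ | q.1 < q.2} from hp)]
      show w p.1 * h p.2 = (Ioi p.1).indicator h p.2 * w p.1
      simp [Set.indicator_apply, Set.mem_Ioi, hp, mul_comm]
    · rw [Set.indicator_of_notMem (show p ∉ {q : ℝ × ℝ | q.1 < q.2} from hp)]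
      show (0:ℝ) = (Ioi p.1).indicator h p.2 * w p.1
      simp [Set.indicator_apply, Set.mem_Ioi, hp]
  have swap := integral_integral_swap hfint
  have lhs_eq : (∫ s in S, ∫ u in S, f s u) = ∫ s in S, w s * G s := by
    apply setIntegral_congr_fun measurableSet_Ioc
    intro s hs
    show (∫ u in S, (Ioi s).indicator h u * w s) = w s * G s
    rw [integral_mul_const, setIntegral_indicator measurableSet_Ioi]
    have hinter : S ∩ Ioi s = Ioc s t₂ := by
      rw [hSdef, Ioc_inter_Ioi, sup_eq_right.mpr (le_of_lt hs.1)]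
    rw [hinter, ← hGeq s hs, mul_comm]
  have rhs_eq : (∫ u in S, ∫ s in S, f s u) = ∫ u in S, h u * (u ^ r - t₁ ^ r) := by
    apply setIntegral_congr_fun measurableSet_Ioc
    intro u hu
    show (∫ s in S, (Ioi s).indicator h u * w s) = h u * (u ^ r - t₁ ^ r)
    have hfu : ∀ s, (Ioi s).indicator h u * w s = (Iio u).indicator (fun s => h u * w s) s := by
      intro s
      by_cases hsu : s < u <;>
        simp [Set.indicator_apply, Set.mem_Ioi, Set.mem_Iio, hsu, mul_comm]
    simp_rw [hfu]
    rw [setIntegral_indicator measurableSet_Iio]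
    have hSu : S ∩ Iio u = Ioo t₁ u := by
      ext v
      simp only [hSdef, mem_inter_iff, mem_Ioc, mem_Iio, mem_Ioo]
      constructor
      · rintro ⟨⟨h1, _⟩, h3⟩; exact ⟨h1, h3⟩
      · rintro ⟨h1, h3⟩; exact ⟨⟨h1, le_trans (le_of_lt h3) hu.2⟩, h3⟩
    rw [hSu, MeasureTheory.integral_const_mul, ← MeasureTheory.integral_Ioc_eq_integral_Ioo,
      ftc u (le_of_lt hu.1)]
  have fub : (∫ s in S, w s * G s) = ∫ u in S, h u * (u ^ r - t₁ ^ r) := by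
    rw [← lhs_eq, ← rhs_eq]; exact swap
  -- expanding the integral of w * g
  have IGw : IntegrableOn (fun s => w s * G s) S := by
    have hb : Integrable (fun s => G s * w s) (volume.restrict S) := by
      apply Integrable.bdd_mul (c := A) IwS hGmeas.aestronglyMeasurable
      exact ae_of_all _ fun s => by
        rw [Real.norm_eq_abs, abs_of_nonneg (hGnonneg s)]; exact hGleA s
    exact IntegrableOn.congr_fun hb (fun s _ => mul_comm _ _) measurableSet_Ioc
  have expand : (∫ s in S, w s * g s)
      = g t₂ * (t₂ ^ r - t₁ ^ r) + ∫ u in S, h u * (u ^ r - t₁ ^ r) := by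
    have e1 : (∫ s in S, w s * g s) = ∫ s in S, (g t₂ * w s + w s * G s) := by
      apply setIntegral_congr_fun measurableSet_Ioc
      intro s hs
      show w s * g s = g t₂ * w s + w s * G s
      rw [hgS s hs]; ring
    rw [e1, integral_add (IwS.const_mul _) IGw, MeasureTheory.integral_const_mul, fub]
    congr 1
    rw [hSdef, ftc t₂ h12]
  have split_rhs : (∫ u in S, h u * (u ^ r - t₁ ^ r))
      = (∫ u in S, u ^ r * h u) - t₁ ^ r * A := by
    have e : ∀ u ∈ S, h u * (u ^ r - t₁ ^ r) = u ^ r * h u - t₁ ^ r * h u :=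
      fun u _ => by ring
    rw [setIntegral_congr_fun measurableSet_Ioc e,
      integral_sub IφrS (IφS.const_mul _), MeasureTheory.integral_const_mul, ← hAdef]
  have heq : g t₁ * t₁ ^ r - g t₂ * t₂ ^ r
      = (∫ u in S, u ^ r * h u) - ∫ s in S, w s * g s := by
    rw [expand, split_rhs, hA]; ring
  linarith [key, heq]
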